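/- For every nonnegative integer n and every x ≠ 0, Rubin's q-differential operator applied to the higher-order q-Genocchi polynomial splits into even and odd parts as ∂_q G_{n,q}^{(α)}(x) = Σ_{l=1}^{⌊n/2⌋} binom(n,2l)_q · q^{-2l} [2l]_q · x^{2l-1} · G_{n-2l,q}^{(α)} + Σ_{l=0}^{⌊(n-1)/2⌋} binom(n,2l+1)_q · [2l+1]_q · x^{2l} · G_{n-1-2l,q}^{(α)}, where ⌊·⌋ denotes the integer part and G_{n,q}^{(α)} = G_{n,q}^{(α)}(0). -/

import Mathlib

open PowerSeries Finset

/-- The `q`-number `[n]_q = (1 - q^n)/(1 - q)`. -/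
noncomputable def qNum (q : ℂ) (n : ℕ) : ℂ := (1 - q ^ n) / (1 - q)

/-- The `q`-factorial `[n]_q! = [n]_q [n-1]_q ⋯ [1]_q`, with `[0]_q! = 1`. -/
noncomputable def qFact (q : ℂ) : ℕ → ℂ
  | 0 => 1
  | n + 1 => qNum q (n + 1) * qFact q n

/-- The Gaussian `q`-binomial coefficient `[n]_q! / ([k]_q! [n-k]_q!)`. -/
noncomputable def qBinom (q : ℂ) (n k : ℕ) : ℂ :=
  qFact q n / (qFact q k * qFact q (n - k))

/-- `e_q(zx)` as a formal power series in `z`: `∑ x^l z^l / [l]_q!`. -/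
noncomputable def qExpGF (q x : ℂ) : PowerSeries ℂ :=
  PowerSeries.mk fun l => x ^ l / qFact q l

/-- The generating function `([2]_q z / (e_q(z)+1))^α e_q(zx)` of the
higher-order `q`-Genocchi polynomials, as a formal power series in `z`. -/
noncomputable def qGenocchiGF (q : ℂ) (α : ℕ) (x : ℂ) : PowerSeries ℂ :=
  (PowerSeries.C (qNum q 2) * PowerSeries.X * (qExpGF q 1 + 1)⁻¹) ^ α * qExpGF q x

lemma one_sub_q_ne {q : ℂ} (hq1 : ‖q‖ < 1) : (1 : ℂ) - q ≠ 0 := by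
  intro h
  have : q = 1 := by linear_combination -h
  rw [this] at hq1; simp at hq1

lemma qNum_ne_zero {q : ℂ} (hq1 : ‖q‖ < 1) {n : ℕ} (hn : n ≠ 0) : qNum q n ≠ 0 := by
  have h2 : (1 : ℂ) - q ^ n ≠ 0 := by
    intro h
    have hq : q ^ n = 1 := by linear_combination -h
    have : ‖q ^ n‖ < 1 := by
      rw [norm_pow]
      exact pow_lt_one₀ (norm_nonneg q) hq1 hn
    rw [hq] at this; simp at this
  exact div_ne_zero h2 (one_sub_q_ne hq1)

lemma qFact_ne_zero {q : ℂ} (hq1 : ‖q‖ < 1) (n : ℕ) : qFact q n ≠ 0 := by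
  induction n with
  | zero => simp [qFact]
  | succ m ih => exact mul_ne_zero (qNum_ne_zero hq1 (Nat.succ_ne_zero m)) ih

lemma G_expand (q : ℂ) (hq1 : ‖q‖ < 1) (α : ℕ) (G : ℕ → ℂ → ℂ)
    (hG : ∀ x : ℂ, PowerSeries.mk (fun n => G n x / qFact q n) = qGenocchiGF q α x)
    (n : ℕ) (x : ℂ) :
    G n x = ∑ k ∈ range (n + 1), qBinom q n k * x ^ k * G (n - k) 0 := by
  have hE0 : qExpGF q 0 = 1 := by
    ext m
    cases m with
    | zero => simp [qExpGF, qFact]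
    | succ m => simp [qExpGF]
  have key : PowerSeries.mk (fun n => G n x / qFact q n)
      = PowerSeries.mk (fun m => G m 0 / qFact q m) * qExpGF q x := by
    rw [hG x, hG 0]
    simp only [qGenocchiGF, hE0, mul_one]
  have hc := congrArg (PowerSeries.coeff n) key
  rw [PowerSeries.coeff_mk, PowerSeries.coeff_mul,
    Finset.Nat.sum_antidiagonal_eq_sum_range_succ_mk] at hc
  simp only [PowerSeries.coeff_mk, qExpGF] at hc
  have hn := qFact_ne_zero hq1 n
  have hGx : G n x = (∑ k ∈ range (n + 1),
      G k 0 / qFact q k * (x ^ (n - k) / qFact q (n - k))) * qFact q n :=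
    (div_eq_iff hn).mp hc
  rw [hGx, Finset.sum_mul, ← Finset.sum_range_reflect]
  refine Finset.sum_congr rfl fun k hk => ?_
  rw [Finset.mem_range, Nat.lt_succ_iff] at hk
  have h1 : n + 1 - 1 - k = n - k := by omega
  have h2 : n - (n - k) = k := Nat.sub_sub_self hk
  simp only [h1, qBinom, h2]
  have hk1 := qFact_ne_zero hq1 k
  have hk2 := qFact_ne_zero hq1 (n - k)
  field_simp

/-- Rubin's `q`-differential operator applied to the higher-order `q`-Genocchi
polynomial splits into even and odd parts: for `n ≥ 0` and `x ≠ 0`,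
`∂_q G_{n,q}^{(α)}(x)
  = ∑_{l=1}^{⌊n/2⌋} binom(n,2l)_q q^{-2l} [2l]_q x^{2l-1} G_{n-2l,q}^{(α)}
  + ∑_{l=0}^{⌊(n-1)/2⌋} binom(n,2l+1)_q [2l+1]_q x^{2l} G_{n-1-2l,q}^{(α)}`,
where `G_{m,q}^{(α)} = G_{m,q}^{(α)}(0)`.  (The second sum, over
`0 ≤ l ≤ ⌊(n-1)/2⌋`, is indexed by `Finset.range ((n+1)/2)`, which is empty when
`n = 0`, matching the real-floor convention `⌊-1/2⌋ = -1`.) -/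
theorem rubin_qDeriv_qGenocchi_even_odd (q : ℂ) (hq0 : 0 < ‖q‖) (hq1 : ‖q‖ < 1)
    (α : ℕ) (hα : 0 < α) (G : ℕ → ℂ → ℂ)
    (hG : ∀ x : ℂ, PowerSeries.mk (fun n => G n x / qFact q n) = qGenocchiGF q α x) :
    ∀ (n : ℕ) (x : ℂ), x ≠ 0 →
      (G n (q⁻¹ * x) + G n (-(q⁻¹ * x)) - G n (q * x) + G n (-(q * x)) - 2 * G n (-x)) /
          (2 * (1 - q) * x) =
        (∑ l ∈ Finset.Icc 1 (n / 2),
            qBinom q n (2 * l) * q ^ (-(2 * l : ℤ)) * qNum q (2 * l) * x ^ (2 * l - 1) *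
              G (n - 2 * l) 0) +
          ∑ l ∈ Finset.range ((n + 1) / 2),
            qBinom q n (2 * l + 1) * qNum q (2 * l + 1) * x ^ (2 * l) *
              G (n - 1 - 2 * l) 0 := by
  intro n x hx
  have hq : q ≠ 0 := by
    intro h; rw [h] at hq0; simp at hq0
  have h1q : (1 : ℂ) - q ≠ 0 := one_sub_q_ne hq1
  have hden : (2 : ℂ) * (1 - q) * x ≠ 0 := by
    exact mul_ne_zero (mul_ne_zero two_ne_zero h1q) hx
  rw [div_eq_iff hden]
  set e : ℕ → ℂ := fun k =>
    (q⁻¹ * x) ^ k + (-(q⁻¹ * x)) ^ k - (q * x) ^ k + (-(q * x)) ^ k - 2 * (-x) ^ k with he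
  have hGE := G_expand q hq1 α G hG n
  have hN : G n (q⁻¹ * x) + G n (-(q⁻¹ * x)) - G n (q * x) + G n (-(q * x)) - 2 * G n (-x)
      = ∑ k ∈ range (n + 1), qBinom q n k * G (n - k) 0 * e k := by
    rw [hGE (q⁻¹ * x), hGE (-(q⁻¹ * x)), hGE (q * x), hGE (-(q * x)), hGE (-x),
      Finset.mul_sum, ← Finset.sum_add_distrib, ← Finset.sum_sub_distrib,
      ← Finset.sum_add_distrib, ← Finset.sum_sub_distrib]
    exact Finset.sum_congr rfl fun k _ => by simp only [he]; ring
  rw [hN, ← Finset.sum_filter_add_sum_filter_not (range (n + 1)) Even]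
  have heven : ∑ k ∈ (range (n + 1)).filter (fun k => Even k),
      qBinom q n k * G (n - k) 0 * e k
      = ∑ l ∈ range (n / 2 + 1), qBinom q n (2 * l) * G (n - 2 * l) 0 * e (2 * l) := by
    refine Finset.sum_nbij' (fun k => k / 2) (fun l => 2 * l) ?_ ?_ ?_ ?_ ?_
    · intro a ha
      simp only [Finset.mem_filter, Finset.mem_range, Nat.even_iff] at ha
      simp only [Finset.mem_range]
      omega
    · intro a ha
      simp only [Finset.mem_range] at ha
      simp only [Finset.mem_filter, Finset.mem_range, Nat.even_iff]
      omega
    · intro a ha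
      simp only [Finset.mem_filter, Nat.even_iff] at ha
      show 2 * (a / 2) = a
      omega
    · intro a _
      show 2 * a / 2 = a
      omega
    · intro a ha
      simp only [Finset.mem_filter, Nat.even_iff] at ha
      have h2a : 2 * (a / 2) = a := by omega
      show _ = qBinom q n (2 * (a / 2)) * G (n - 2 * (a / 2)) 0 * e (2 * (a / 2))
      rw [h2a]
  have hodd : ∑ k ∈ (range (n + 1)).filter (fun k => ¬ Even k),
      qBinom q n k * G (n - k) 0 * e k
      = ∑ l ∈ range ((n + 1) / 2),
          qBinom q n (2 * l + 1) * G (n - (2 * l + 1)) 0 * e (2 * l + 1) := by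
    refine Finset.sum_nbij' (fun k => k / 2) (fun l => 2 * l + 1) ?_ ?_ ?_ ?_ ?_
    · intro a ha
      simp only [Finset.mem_filter, Finset.mem_range, Nat.even_iff] at ha
      simp only [Finset.mem_range]
      omega
    · intro a ha
      simp only [Finset.mem_range] at ha
      simp only [Finset.mem_filter, Finset.mem_range, Nat.even_iff]
      omega
    · intro a ha
      simp only [Finset.mem_filter, Nat.even_iff] at ha
      show 2 * (a / 2) + 1 = a
      omega
    · intro a _
      show (2 * a + 1) / 2 = a
      omega
    · intro a ha
      simp only [Finset.mem_filter, Nat.even_iff] at ha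
      have h2a : 2 * (a / 2) + 1 = a := by omega
      show _ = qBinom q n (2 * (a / 2) + 1) * G (n - (2 * (a / 2) + 1)) 0 * e (2 * (a / 2) + 1)
      rw [h2a]
  rw [heven, hodd]
  have hins : range (n / 2 + 1) = insert 0 (Finset.Icc 1 (n / 2)) := by
    ext k
    simp only [Finset.mem_range, Finset.mem_insert, Finset.mem_Icc, Nat.lt_succ_iff]
    omega
  rw [hins, Finset.sum_insert (by simp)]
  have he0 : qBinom q n (2 * 0) * G (n - 2 * 0) 0 * e (2 * 0) = 0 := by
    simp only [he, mul_zero, pow_zero]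
    ring
  rw [he0, zero_add]
  have hevenTerm : ∀ l ∈ Finset.Icc 1 (n / 2),
      qBinom q n (2 * l) * G (n - 2 * l) 0 * e (2 * l)
      = qBinom q n (2 * l) * q ^ (-(2 * l : ℤ)) * qNum q (2 * l) * x ^ (2 * l - 1) *
          G (n - 2 * l) 0 * (2 * (1 - q) * x) := by
    intro l hl
    rw [Finset.mem_Icc] at hl
    have hzp : q ^ (-(2 * l : ℤ)) = (q ^ (2 * l))⁻¹ := by
      rw [show (-(2 * (l : ℤ))) = -((2 * l : ℕ) : ℤ) by push_cast; ring, zpow_neg,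
        zpow_natCast]
    have hxx : x ^ (2 * l) = x ^ (2 * l - 1) * x := by
      rw [← pow_succ]
      congr 1
      omega
    have hev : Even (2 * l) := even_two_mul l
    simp only [he, hev.neg_pow, hzp, qNum, mul_pow, inv_pow, hxx]
    have hql : q ^ (2 * l) ≠ 0 := pow_ne_zero _ hq
    field_simp
    ring
  rw [Finset.sum_congr rfl hevenTerm]
  have hoddTerm : ∀ l ∈ range ((n + 1) / 2),
      qBinom q n (2 * l + 1) * G (n - (2 * l + 1)) 0 * e (2 * l + 1)
      = qBinom q n (2 * l + 1) * qNum q (2 * l + 1) * x ^ (2 * l) *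
          G (n - 1 - 2 * l) 0 * (2 * (1 - q) * x) := by
    intro l _
    have hodd' : Odd (2 * l + 1) := odd_two_mul_add_one l
    have hsub : n - (2 * l + 1) = n - 1 - 2 * l := by omega
    simp only [he, hodd'.neg_pow, qNum, mul_pow, hsub, pow_succ]
    field_simp
    ring
  rw [Finset.sum_congr rfl hoddTerm]
  rw [← Finset.sum_mul, ← Finset.sum_mul, ← add_mul]
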